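/- For n ≥ 4, the function a ↦ 1/2 - (1/8 + (12a+n-2)²/(128(n-2+4a)a))·((n-2)(n-4a)/a) is strictly increasing in a on (0, n/4]. -/
import Mathlib


/-- For `n ≥ 4`, the map
`a ↦ 1/2 - (1/8 + (12a+n-2)²/(128(n-2+4a)a))·((n-2)(n-4a)/a)`
is strictly increasing on `(0, n/4]`. -/
theorem stmt12 (n : ℕ) (hn : 4 ≤ n) :
    StrictMonoOn
      (fun a : ℝ =>
        1 / 2 - (1 / 8 + (12 * a + (n : ℝ) - 2) ^ 2 / (128 * ((n : ℝ) - 2 + 4 * a) * a)) *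
          (((n : ℝ) - 2) * ((n : ℝ) - 4 * a) / a))
      (Set.Ioc 0 ((n : ℝ) / 4)) := by
  intro a ha b hb hab
  obtain ⟨ha0, haN⟩ := ha
  obtain ⟨hb0, hbN⟩ := hb
  have hm : (4:ℝ) ≤ (n:ℝ) := by exact_mod_cast hn
  set m : ℝ := (n:ℝ) with hmdef
  have hc : 0 < m - 2 := by linarith
  have hda : 0 < m - 2 + 4*a := by linarith
  have hdb : 0 < m - 2 + 4*b := by linarith
  simp only
  have key :
      (1 / 2 - (1 / 8 + (12 * b + m - 2) ^ 2 / (128 * (m - 2 + 4 * b) * b)) *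
          ((m - 2) * (m - 4 * b) / b))
      - (1 / 2 - (1 / 8 + (12 * a + m - 2) ^ 2 / (128 * (m - 2 + 4 * a) * a)) *
          ((m - 2) * (m - 4 * a) / a))
      = ((b - a) * ((m-2) * (m*(m-2)^3*(a+b) + 4*m*(m-2)^2*(a^2+b^2)
          + 8*a*b*(m-2)^2*(5*m+1) + 16*a*b*(m-2)*(9*m+2)*(a+b)
          + 128*a^2*b^2*(8*m-3))))
        / (128 * a^2 * b^2 * (m - 2 + 4*a) * (m - 2 + 4*b)) := by
    field_simp
    ring
  have hpos : 0 < ((b - a) * ((m-2) * (m*(m-2)^3*(a+b) + 4*m*(m-2)^2*(a^2+b^2)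
          + 8*a*b*(m-2)^2*(5*m+1) + 16*a*b*(m-2)*(9*m+2)*(a+b)
          + 128*a^2*b^2*(8*m-3))))
        / (128 * a^2 * b^2 * (m - 2 + 4*a) * (m - 2 + 4*b)) := by
    have hm0 : 0 < m := by linarith
    apply div_pos
    · apply mul_pos (by linarith)
      apply mul_pos hc
      have t1 : 0 < m*(m-2)^3*(a+b) :=
        mul_pos (mul_pos hm0 (pow_pos hc 3)) (by linarith)
      have t2 : 0 < 4*m*(m-2)^2*(a^2+b^2) :=
        mul_pos (mul_pos (by linarith) (pow_pos hc 2)) (by positivity)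
      have t3 : 0 < 8*a*b*(m-2)^2*(5*m+1) :=
        mul_pos (mul_pos (mul_pos (by linarith) hb0) (pow_pos hc 2)) (by linarith)
      have t4 : 0 < 16*a*b*(m-2)*(9*m+2)*(a+b) :=
        mul_pos (mul_pos (mul_pos (mul_pos (by linarith) hb0) hc) (by linarith)) (by linarith)
      have t5 : 0 < 128*a^2*b^2*(8*m-3) :=
        mul_pos (mul_pos (mul_pos (by norm_num) (pow_pos ha0 2)) (pow_pos hb0 2)) (by linarith)
      linarith
    · exact mul_pos (mul_pos (mul_pos (mul_pos (by norm_num) (pow_pos ha0 2)) (pow_pos hb0 2)) hda) hdb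
  linarith [key, hpos]
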